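/- (MDP Wardrop equilibria of potential games minimize the potential.) Let F : (Fin (T+1) → Fin S → Fin A → ℝ) → ℝ be convex and differentiable, with the partial derivative of F with respect to the coordinate (t,s,a) at every point y equal to ℓ t s a (y). If y⋆ ∈ Y(P,p) is an MDP Wardrop equilibrium, then y⋆ minimizes F over Y(P,p): F(y⋆) ≤ F(y) for every y ∈ Y(P,p). -/

import Mathlib

/-- The feasible set of population distributions for transition kernel `P`
and initial distribution `p`. -/
def feasibleY {T S A : ℕ}
    (P : Fin T → Fin S → Fin S → Fin A → ℝ) (p : Fin S → ℝ) :
    Set (Fin (T + 1) → Fin S → Fin A → ℝ) :=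
  {y | (∀ t s a, 0 ≤ y t s a) ∧
       (∀ s, ∑ a, y 0 s a = p s) ∧
       (∀ (t : Fin T) (s : Fin S),
          ∑ a, y t.succ s a = ∑ s', ∑ a, P t s s' a * y t.castSucc s' a)}

/-- Auxiliary Q-value function, indexed by "time remaining" `j` (so `j = 0`
corresponds to the final time `T`, and `j` corresponds to time `T - j`). -/
noncomputable def Qaux {T S A : ℕ}
    (P : Fin T → Fin S → Fin S → Fin A → ℝ)
    (ℓ : Fin (T + 1) → Fin S → Fin A → ((Fin (T + 1) → Fin S → Fin A → ℝ) → ℝ)) :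
    (j : ℕ) → j ≤ T → Fin S → Fin A → (Fin (T + 1) → Fin S → Fin A → ℝ) → ℝ
  | 0, _, s, a, y => ℓ (Fin.last T) s a y
  | (j + 1), h, s, a, y =>
      ℓ ⟨T - (j + 1), by omega⟩ s a y +
        ∑ s' : Fin S, P ⟨T - (j + 1), by omega⟩ s' s a *
          ⨅ a' : Fin A, Qaux P ℓ j (by omega) s' a' y

/-- The Q-value function of the MDP congestion game, defined by backward
recursion: `Q T s a y = ℓ T s a y` and for `t < T`,
`Q t s a y = ℓ t s a y + ∑ s', P t s' s a * min_{a'} Q (t+1) s' a' y`. -/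
noncomputable def Qval {T S A : ℕ}
    (P : Fin T → Fin S → Fin S → Fin A → ℝ)
    (ℓ : Fin (T + 1) → Fin S → Fin A → ((Fin (T + 1) → Fin S → Fin A → ℝ) → ℝ)) :
    Fin (T + 1) → Fin S → Fin A → (Fin (T + 1) → Fin S → Fin A → ℝ) → ℝ :=
  fun t => Qaux P ℓ (T - t.val) (Nat.sub_le T t.val)


section Aux

lemma pi_decomp {n m k : ℕ} (v : Fin n → Fin m → Fin k → ℝ) :
    v = ∑ t, ∑ s, ∑ a, v t s a •
      (Pi.single t (Pi.single s (Pi.single a (1:ℝ)) : Fin m → Fin k → ℝ) :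
        Fin n → Fin m → Fin k → ℝ) := by
  funext t' s' a'
  simp [Finset.sum_apply, Pi.single_apply, ite_apply, apply_ite, smul_ite, Finset.sum_ite_eq']

lemma convex_first_order {E : Type*} [NormedAddCommGroup E] [NormedSpace ℝ E]
    {F : E → ℝ} (hF : ConvexOn ℝ Set.univ F) (hd : Differentiable ℝ F) (x v : E) :
    F x + fderiv ℝ F x v ≤ F (x + v) := by
  have hg : ConvexOn ℝ Set.univ (fun τ : ℝ => F (x + τ • v)) := by
    have h := hF.comp_affineMap (AffineMap.lineMap x (x + v) : ℝ →ᵃ[ℝ] E)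
    have heq : (Set.univ : Set ℝ) = (AffineMap.lineMap x (x + v) : ℝ →ᵃ[ℝ] E) ⁻¹' Set.univ := rfl
    rw [heq]
    convert h using 2 with τ
    · rfl
    · rfl
    · rfl
    · rfl
    · simp [AffineMap.lineMap_apply, add_comm]
  have h1 : HasDerivAt (fun τ : ℝ => x + τ • v) v 0 := by
    simpa using ((hasDerivAt_id (0:ℝ)).smul_const v).const_add x
  have h2 : HasFDerivAt F (fderiv ℝ F x) (x + (0:ℝ) • v) := by
    simpa using (hd x).hasFDerivAt
  have hder : HasDerivAt (fun τ : ℝ => F (x + τ • v)) (fderiv ℝ F x v) 0 := by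
    exact h2.comp_hasDerivAt 0 h1
  have hs := hg.le_slope_of_hasDerivAt (Set.mem_univ (0:ℝ)) (Set.mem_univ (1:ℝ))
    zero_lt_one hder
  rw [slope_def_field] at hs
  simp at hs
  linarith

lemma Qaux_congr {T S A : ℕ} (P : Fin T → Fin S → Fin S → Fin A → ℝ)
    (ℓ : Fin (T + 1) → Fin S → Fin A → ((Fin (T + 1) → Fin S → Fin A → ℝ) → ℝ))
    {j j' : ℕ} (e : j = j') (h : j ≤ T) (h' : j' ≤ T) :
    Qaux P ℓ j h = Qaux P ℓ j' h' := by subst e; rfl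

lemma Qval_last {T S A : ℕ} (P : Fin T → Fin S → Fin S → Fin A → ℝ)
    (ℓ : Fin (T + 1) → Fin S → Fin A → ((Fin (T + 1) → Fin S → Fin A → ℝ) → ℝ))
    (s : Fin S) (a : Fin A) (y : Fin (T + 1) → Fin S → Fin A → ℝ) :
    Qval P ℓ (Fin.last T) s a y = ℓ (Fin.last T) s a y := by
  unfold Qval
  rw [Qaux_congr P ℓ (by simp) _ (Nat.zero_le T)]
  rfl

lemma Qval_castSucc {T S A : ℕ} (P : Fin T → Fin S → Fin S → Fin A → ℝ)
    (ℓ : Fin (T + 1) → Fin S → Fin A → ((Fin (T + 1) → Fin S → Fin A → ℝ) → ℝ))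
    (t : Fin T) (s : Fin S) (a : Fin A) (y : Fin (T + 1) → Fin S → Fin A → ℝ) :
    Qval P ℓ t.castSucc s a y = ℓ t.castSucc s a y +
      ∑ s', P t s' s a * ⨅ a', Qval P ℓ t.succ s' a' y := by
  have ht : t.val < T := t.isLt
  unfold Qval
  rw [Qaux_congr P ℓ (show T - (t.castSucc).val = (T - (t.val + 1)) + 1 by
    simp [Fin.coe_castSucc]; omega) _ (by omega)]
  show ℓ _ s a y + _ = _
  have e1 : T - (T - (t.val + 1) + 1) = t.val := by omega
  have einner : ∀ (h : T - (t.val+1) ≤ T) s' a',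
      Qaux P ℓ (T - (t.val+1)) h s' a' y = Qval P ℓ t.succ s' a' y := by
    intro h s' a'
    rw [Qaux_congr P ℓ (show T - (t.val+1) = T - (t.succ).val by simp) _ (Nat.sub_le _ _)]
    rfl
  simp only [einner, e1, Fin.eta]
  have e2 : (⟨(t:ℕ), by omega⟩ : Fin (T+1)) = t.castSucc := Fin.ext rfl
  simp only [e2]
  rfl

lemma key_identity {T S A : ℕ}
    (P : Fin T → Fin S → Fin S → Fin A → ℝ) (p : Fin S → ℝ)
    (y : Fin (T + 1) → Fin S → Fin A → ℝ) (hy : y ∈ feasibleY P p)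
    (c Q : Fin (T + 1) → Fin S → Fin A → ℝ) (V : Fin (T + 1) → Fin S → ℝ)
    (hlast : ∀ s a, c (Fin.last T) s a = Q (Fin.last T) s a)
    (hstep : ∀ (t : Fin T) s a,
      c t.castSucc s a = Q t.castSucc s a - ∑ s', P t s' s a * V t.succ s') :
    ∑ t, ∑ s, ∑ a, c t s a * y t s a
      = (∑ t, ∑ s, ∑ a, (Q t s a - V t s) * y t s a) + ∑ s, V 0 s * p s := by
  obtain ⟨hy0, hyinit, hyflow⟩ := hy
  have h1 : ∀ t : Fin T,
      ∑ s, ∑ a, (∑ s', P t s' s a * V t.succ s') * y t.castSucc s a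
        = ∑ s, ∑ a, V t.succ s * y t.succ s a := by
    intro t
    have hrhs : ∀ s', ∑ a, V t.succ s' * y t.succ s' a
        = ∑ s, ∑ a, V t.succ s' * (P t s' s a * y t.castSucc s a) := by
      intro s'
      rw [← Finset.mul_sum, hyflow t s', Finset.mul_sum]
      congr 1; funext s; rw [Finset.mul_sum]
    calc ∑ s, ∑ a, (∑ s', P t s' s a * V t.succ s') * y t.castSucc s a
        = ∑ s, ∑ a, ∑ s', V t.succ s' * (P t s' s a * y t.castSucc s a) := by
          apply Finset.sum_congr rfl; intro s _
          apply Finset.sum_congr rfl; intro a _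
          rw [Finset.sum_mul]; apply Finset.sum_congr rfl; intro s' _; ring
      _ = ∑ s', ∑ s, ∑ a, V t.succ s' * (P t s' s a * y t.castSucc s a) := by
          have hx : ∀ s : Fin S, ∑ a : Fin A, ∑ s' : Fin S,
              V t.succ s' * (P t s' s a * y t.castSucc s a)
              = ∑ s' : Fin S, ∑ a : Fin A, V t.succ s' * (P t s' s a * y t.castSucc s a) :=
            fun s => Finset.sum_comm
          simp only [hx]
          exact Finset.sum_comm
      _ = ∑ s', ∑ a, V t.succ s' * y t.succ s' a := by
          apply Finset.sum_congr rfl; intro s' _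
          rw [hrhs s']
  have hc : ∑ t, ∑ s, ∑ a, c t s a * y t s a
      = ∑ t, ∑ s, ∑ a, Q t s a * y t s a
        - ∑ t : Fin T, ∑ s, ∑ a, (∑ s', P t s' s a * V t.succ s') * y t.castSucc s a := by
    rw [Fin.sum_univ_castSucc (f := fun t => ∑ s, ∑ a, c t s a * y t s a),
        Fin.sum_univ_castSucc (f := fun t => ∑ s, ∑ a, Q t s a * y t s a)]
    simp only [hstep, hlast, sub_mul, Finset.sum_sub_distrib]
    ring
  have hkv : ∑ t, ∑ s, ∑ a, V t s * y t s a
      = ∑ s, ∑ a, V 0 s * y 0 s a + ∑ t : Fin T, ∑ s, ∑ a, V t.succ s * y t.succ s a :=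
    Fin.sum_univ_succ _
  have h0 : ∑ s, ∑ a, V 0 s * y 0 s a = ∑ s, V 0 s * p s := by
    apply Finset.sum_congr rfl; intro s _
    rw [← Finset.mul_sum, hyinit]
  rw [hc]
  have h1' : ∑ t : Fin T, ∑ s, ∑ a, (∑ s', P t s' s a * V t.succ s') * y t.castSucc s a
      = ∑ t : Fin T, ∑ s, ∑ a, V t.succ s * y t.succ s a :=
    Finset.sum_congr rfl fun t _ => h1 t
  rw [h1']
  simp only [sub_mul, Finset.sum_sub_distrib]
  rw [hkv, ← h0]
  ring

end Aux

theorem stmt_18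
    (T S A : ℕ) (hS : 1 ≤ S) (hA : 1 ≤ A)
    (P : Fin T → Fin S → Fin S → Fin A → ℝ)
    (hPnonneg : ∀ t s' s a, 0 ≤ P t s' s a)
    (hPsum : ∀ t s a, ∑ s', P t s' s a = 1)
    (p : Fin S → ℝ) (hp : ∀ s, 0 ≤ p s)
    (ℓ : Fin (T + 1) → Fin S → Fin A → ((Fin (T + 1) → Fin S → Fin A → ℝ) → ℝ))
    (hℓcont : ∀ t s a, Continuous (ℓ t s a))
    (F : (Fin (T + 1) → Fin S → Fin A → ℝ) → ℝ)
    (hFconv : ConvexOn ℝ Set.univ F)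
    (hFdiff : Differentiable ℝ F)
    (hFgrad : ∀ y t s a,
      fderiv ℝ F y (Pi.single t (Pi.single s (Pi.single a (1 : ℝ)))) = ℓ t s a y)
    (ystar : Fin (T + 1) → Fin S → Fin A → ℝ)
    (hystar : ystar ∈ feasibleY P p)
    (hwardrop : ∀ t s a, 0 < ystar t s a →
      ∀ a', Qval P ℓ t s a ystar ≤ Qval P ℓ t s a' ystar) :
    ∀ y ∈ feasibleY P p, F ystar ≤ F y := by
  intro y hy
  haveI : Nonempty (Fin A) := Fin.pos_iff_nonempty.mp (by omega)
  set Qs : Fin (T+1) → Fin S → Fin A → ℝ := fun t s a => Qval P ℓ t s a ystar with hQsdef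
  set Vs : Fin (T+1) → Fin S → ℝ := fun t s => ⨅ a, Qs t s a with hVsdef
  have hVle : ∀ t s a, Vs t s ≤ Qs t s a := fun t s a =>
    ciInf_le (Set.Finite.bddBelow (Set.finite_range _)) a
  have hlast : ∀ s a, ℓ (Fin.last T) s a ystar = Qs (Fin.last T) s a := fun s a =>
    (Qval_last P ℓ s a ystar).symm
  have hstep : ∀ (t : Fin T) (s : Fin S) (a : Fin A),
      ℓ t.castSucc s a ystar = Qs t.castSucc s a - ∑ s', P t s' s a * Vs t.succ s' := by
    intro t s a
    have h2 : Qs t.castSucc s a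
        = ℓ t.castSucc s a ystar + ∑ s', P t s' s a * Vs t.succ s' :=
      Qval_castSucc P ℓ t s a ystar
    linarith
  have hy_id := key_identity P p y hy (fun t s a => ℓ t s a ystar) Qs Vs hlast hstep
  have hystar_id := key_identity P p ystar hystar (fun t s a => ℓ t s a ystar) Qs Vs hlast hstep
  have hzero : ∑ t, ∑ s, ∑ a, (Qs t s a - Vs t s) * ystar t s a = 0 := by
    apply Finset.sum_eq_zero; intro t _
    apply Finset.sum_eq_zero; intro s _
    apply Finset.sum_eq_zero; intro a _
    rcases eq_or_lt_of_le (hystar.1 t s a) with h | h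
    · rw [← h, mul_zero]
    · have hQV : Qs t s a = Vs t s :=
        le_antisymm (le_ciInf fun a' => hwardrop t s a h a') (hVle t s a)
      rw [hQV, sub_self, zero_mul]
  have hnn : 0 ≤ ∑ t, ∑ s, ∑ a, (Qs t s a - Vs t s) * y t s a := by
    apply Finset.sum_nonneg; intro t _
    apply Finset.sum_nonneg; intro s _
    apply Finset.sum_nonneg; intro a _
    exact mul_nonneg (sub_nonneg.2 (hVle t s a)) (hy.1 t s a)
  have hgradval : ∀ v : Fin (T+1) → Fin S → Fin A → ℝ,
      fderiv ℝ F ystar v = ∑ t, ∑ s, ∑ a, ℓ t s a ystar * v t s a := by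
    intro v
    conv_lhs => rw [pi_decomp v]
    rw [map_sum]
    simp only [map_sum, map_smul, smul_eq_mul, hFgrad]
    simp [mul_comm]
  have hkey : F ystar + fderiv ℝ F ystar (y - ystar) ≤ F (ystar + (y - ystar)) :=
    convex_first_order hFconv hFdiff ystar (y - ystar)
  have hys : ystar + (y - ystar) = y := by abel
  rw [hys] at hkey
  have hgeq : 0 ≤ fderiv ℝ F ystar (y - ystar) := by
    rw [hgradval]
    have hsplit : ∑ t, ∑ s, ∑ a, ℓ t s a ystar * (y - ystar) t s a
        = (∑ t, ∑ s, ∑ a, ℓ t s a ystar * y t s a)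
          - ∑ t, ∑ s, ∑ a, ℓ t s a ystar * ystar t s a := by
      simp only [Pi.sub_apply, mul_sub, Finset.sum_sub_distrib]
    rw [hsplit, hy_id, hystar_id, hzero]
    linarith
  linarith
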